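/- For g(x) = −6 + 8x + x² − x³ on X = [0,1]: (a) with y = 0.01, the inequality g(y) + (5/2)(x − y)² ≤ −3 holds for all x ∈ [0,1] (so the Slater-type CQ holds with B = 3, ρ̄ = 5 > 4 = ρ_g); and (b) min_{x ∈ [0,1]} g(x) = −6 > −8 = −2·ρ_g·D² with ρ_g = 4 and D = 1, so strong feasibility fails. -/
import Mathlib


theorem example_cq_but_not_strong_feasibility :
    (∀ x ∈ Set.Icc (0:ℝ) 1,
        (-6 + 8*(0.01:ℝ) + (0.01:ℝ)^2 - (0.01:ℝ)^3) + (5/2) * (x - 0.01)^2 ≤ -3) ∧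
    (∀ x ∈ Set.Icc (0:ℝ) 1, (-6:ℝ) ≤ -6 + 8*x + x^2 - x^3) ∧
    ((-6:ℝ) + 8*0 + (0:ℝ)^2 - (0:ℝ)^3 = -6) ∧
    ((-6:ℝ) > -8) ∧ ((-8:ℝ) = -2 * 4 * 1^2) := by
  refine ⟨?_, ?_, by norm_num, by norm_num, by norm_num⟩
  · rintro x ⟨h0, h1⟩; nlinarith [sq_nonneg (x - 0.01), sq_nonneg x]
  · rintro x ⟨h0, h1⟩; nlinarith [sq_nonneg x, mul_nonneg h0 h0]
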